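/- Let n, r be positive integers with r ≤ n, let U* ∈ ℝ^{n×r} have all row entries nonzero, set M* = U* U*ᵀ and Ω = {(i,j) ∈ [n]×[n] : M*_{ij} ≥ 0}. Suppose Assumptions 1 and 2 hold. If D ∈ ℝ^{n×r} satisfies (U* Dᵀ + D U*ᵀ)_Ω = 0, then there exists a skew-symmetric matrix V ∈ ℝ^{r×r} (V + Vᵀ = 0) such that D = U* V. -/
import Mathlib


open Matrix Classical

noncomputable section

/-- Frobenius norm of a real matrix. -/
def frobNorm {m k : Type*} [Fintype m] [Fintype k] (A : Matrix m k ℝ) : ℝ :=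
  Real.sqrt (∑ i, ∑ j, (A i j) ^ 2)

/-- Frobenius (trace) inner product ⟨A, B⟩ = trace(Aᵀ B). -/
def frobInner {m k : Type*} [Fintype m] [Fintype k] (A B : Matrix m k ℝ) : ℝ :=
  ∑ i, ∑ j, A i j * B i j

/-- `(X)_Ω`: keep entries in `Ω`, zero out the rest. -/
def mask {m : Type*} (Ω : Set (m × m)) (X : Matrix m m ℝ) : Matrix m m ℝ :=
  Matrix.of fun i j => if (i, j) ∈ Ω then X i j else 0

/-- ReLU sampling set: the nonnegative entries of `M`. -/
def reluSet {n : ℕ} (M : Matrix (Fin n) (Fin n) ℝ) : Set (Fin n × Fin n) :=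
  {p | 0 ≤ M p.1 p.2}

/-- The objective `F(U) = (1/4) ‖(U Uᵀ − M)_Ω‖_F²`. -/
def objF {n r : ℕ} (Ω : Set (Fin n × Fin n)) (M : Matrix (Fin n) (Fin n) ℝ)
    (U : Matrix (Fin n) (Fin r) ℝ) : ℝ :=
  (1 / 4) * frobNorm (mask Ω (U * Uᵀ - M)) ^ 2

/-- Rows of `U` whose sign pattern is `s` (`s j = true` means positive entry). -/
def signBlock {n r : ℕ} (U : Matrix (Fin n) (Fin r) ℝ) (s : Fin r → Bool) : Set (Fin n) :=
  {k | ∀ j, (0 < U k j ↔ s j = true)}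

/-- A Gray-code ordering of the `2^r` sign patterns: a bijective enumeration in which
consecutive patterns differ in exactly one coordinate. -/
def IsGrayCode {r : ℕ} (s : Fin (2 ^ r) → Fin r → Bool) : Prop :=
  Function.Bijective s ∧
    ∀ i : ℕ, ∀ h : i + 1 < 2 ^ r,
      ∃! j : Fin r, s ⟨i, Nat.lt_of_succ_lt h⟩ j ≠ s ⟨i + 1, h⟩ j

/-- Assumption 1: each orthant submatrix `U*_i` has full column rank `r`. -/
def Assumption1 {n r : ℕ} (U : Matrix (Fin n) (Fin r) ℝ)
    (s : Fin (2 ^ r) → Fin r → Bool) : Prop :=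
  ∀ i : Fin (2 ^ r),
    Matrix.rank (Matrix.of fun (k : ↥(signBlock U (s i))) (j : Fin r) => U k.1 j) = r

/-- Assumption 2: for consecutive orthants, the observed rank-one matrices
`u*_k (u*_l)ᵀ` with `(k,l) ∈ Ω_{i+1,i}` span `ℝ^{r×r}`. -/
def Assumption2 {n r : ℕ} (U : Matrix (Fin n) (Fin r) ℝ)
    (s : Fin (2 ^ r) → Fin r → Bool) : Prop :=
  ∀ i : ℕ, ∀ h : i + 1 < 2 ^ r,
    Submodule.span ℝ
      {A : Matrix (Fin r) (Fin r) ℝ |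
        ∃ k l : Fin n, k ∈ signBlock U (s ⟨i + 1, h⟩) ∧
          l ∈ signBlock U (s ⟨i, Nat.lt_of_succ_lt h⟩) ∧
          0 ≤ ∑ j, U k j * U l j ∧
          A = Matrix.of fun a b => U k a * U l b} = ⊤


lemma isUnit_det_of_rank_eq' {r : ℕ} (G : Matrix (Fin r) (Fin r) ℝ) (h : G.rank = r) :
    IsUnit G.det := by
  have hsurj : Function.Surjective G.mulVec := by
    have htop : LinearMap.range G.mulVecLin = ⊤ := by
      apply Submodule.eq_top_of_finrank_eq
      rw [Module.finrank_fintype_fun_eq_card]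
      simpa [Matrix.rank] using h
    intro y
    obtain ⟨x, hx⟩ := htop ▸ Submodule.mem_top (x := y)
    exact ⟨x, hx⟩
  exact (Matrix.isUnit_iff_isUnit_det G).mp (Matrix.mulVec_surjective_iff_isUnit.mp hsurj)

lemma blockV' {n r : ℕ} (U D : Matrix (Fin n) (Fin r) ℝ) (t : Fin r → Bool)
    (hrank : Matrix.rank (Matrix.of fun (k : ↥(signBlock U t)) (j : Fin r) => U k.1 j) = r)
    (hrel : ∀ k l : Fin n, k ∈ signBlock U t → l ∈ signBlock U t →
      (∑ j, U k j * D l j) + (∑ j, D k j * U l j) = 0) :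
    ∃ W : Matrix (Fin r) (Fin r) ℝ, W + Wᵀ = 0 ∧
      ∀ k ∈ signBlock U t, ∀ a, D k a = ∑ b, U k b * W b a := by
  haveI : Fintype ↥(signBlock U t) := Fintype.ofFinite _
  set A : Matrix ↥(signBlock U t) (Fin r) ℝ := Matrix.of fun k j => U k.1 j with hA
  set Bm : Matrix ↥(signBlock U t) (Fin r) ℝ := Matrix.of fun k j => D k.1 j with hB
  have hABrel : A * Bmᵀ + Bm * Aᵀ = 0 := by
    ext k l
    have := hrel k.1 l.1 k.2 l.2
    simpa [Matrix.mul_apply, Matrix.add_apply, hA, hB] using this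
  set G := Aᵀ * A with hG
  have hGrank : G.rank = r := by rw [hG, Matrix.rank_transpose_mul_self, hrank]
  have hdet : IsUnit G.det := isUnit_det_of_rank_eq' G hGrank
  have hGi1 : G⁻¹ * G = 1 := Matrix.nonsing_inv_mul G hdet
  have hGi2 : G * G⁻¹ = 1 := Matrix.mul_nonsing_inv G hdet
  have hGT : Gᵀ = G := by rw [hG, Matrix.transpose_mul, Matrix.transpose_transpose]
  have hGiT : (G⁻¹)ᵀ = G⁻¹ := by rw [Matrix.transpose_nonsing_inv, hGT]
  have hAB : A * Bmᵀ = -(Bm * Aᵀ) := eq_neg_of_add_eq_zero_left hABrel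
  have h1 : Bmᵀ = -(G⁻¹ * (Aᵀ * (Bm * Aᵀ))) := by
    calc Bmᵀ = G⁻¹ * (G * Bmᵀ) := by rw [← Matrix.mul_assoc, hGi1, Matrix.one_mul]
    _ = G⁻¹ * (Aᵀ * (A * Bmᵀ)) := by rw [hG, Matrix.mul_assoc]
    _ = -(G⁻¹ * (Aᵀ * (Bm * Aᵀ))) := by rw [hAB]; simp [Matrix.mul_neg]
  set W := G⁻¹ * (Aᵀ * Bm) with hW
  have hBW : Bm = A * W := by
    have h2 := congrArg Matrix.transpose h1
    simp only [Matrix.transpose_transpose, Matrix.transpose_neg, Matrix.transpose_mul,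
      hGiT, Matrix.mul_assoc] at h2
    rw [h1] at h2
    simp only [Matrix.neg_mul, Matrix.mul_neg, neg_neg, Matrix.mul_assoc] at h2
    rw [← Matrix.mul_assoc Aᵀ A G⁻¹, ← hG, hGi2, Matrix.mul_one] at h2
    exact h2
  have hskew : Wᵀ + W = 0 := by
    have hz0 := hABrel
    rw [hBW] at hz0
    have hz1 : A * ((Wᵀ + W) * Aᵀ) = 0 := by
      rw [Matrix.add_mul, Matrix.mul_add, ← hz0]
      simp only [Matrix.transpose_mul, Matrix.mul_assoc]
    have hz2 := congrArg (fun X => G⁻¹ * (Aᵀ * X)) hz1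
    simp only [Matrix.mul_zero] at hz2
    rw [← Matrix.mul_assoc Aᵀ A, ← hG, ← Matrix.mul_assoc G⁻¹ G, hGi1, Matrix.one_mul] at hz2
    have hz3 := congrArg (fun X => X * (A * G⁻¹)) hz2
    simp only [Matrix.zero_mul, Matrix.mul_assoc] at hz3
    rw [← Matrix.mul_assoc Aᵀ A G⁻¹, ← hG, hGi2, Matrix.mul_one] at hz3
    exact hz3
  refine ⟨W, by rw [add_comm]; exact hskew, ?_⟩
  intro k hk a
  have := congrFun (congrFun hBW ⟨k, hk⟩) a
  simpa [Matrix.mul_apply, hA, hB] using this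

/-- under ReLU sampling and Assumptions 1 and 2, any direction `D` with
`(U* Dᵀ + D U*ᵀ)_Ω = 0` is of the form `D = U* V` with `V` skew-symmetric. -/
theorem statement6 {n r : ℕ} (hn : 0 < n) (hr : 0 < r) (hrn : r ≤ n)
    (Ustar : Matrix (Fin n) (Fin r) ℝ) (hnz : ∀ k j, Ustar k j ≠ 0)
    (s : Fin (2 ^ r) → Fin r → Bool) (hs : IsGrayCode s)
    (hA1 : Assumption1 Ustar s) (hA2 : Assumption2 Ustar s)
    (D : Matrix (Fin n) (Fin r) ℝ)
    (hD : mask (reluSet (Ustar * Ustarᵀ)) (Ustar * Dᵀ + D * Ustarᵀ) = 0) :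
    ∃ V : Matrix (Fin r) (Fin r) ℝ, V + Vᵀ = 0 ∧ D = Ustar * V := by
  have pos2r : 0 < 2 ^ r := pow_pos (by norm_num) r
  have hrel0 : ∀ k l : Fin n, 0 ≤ ∑ j, Ustar k j * Ustar l j →
      (∑ j, Ustar k j * D l j) + (∑ j, D k j * Ustar l j) = 0 := by
    intro k l h
    have hm : (k, l) ∈ reluSet (Ustar * Ustarᵀ) := by
      simpa [reluSet, Matrix.mul_apply, Matrix.transpose_apply] using h
    have h2 := congrFun (congrFun hD k) l
    simp only [mask, Matrix.of_apply, if_pos hm, Matrix.zero_apply] at h2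
    simpa [Matrix.add_apply, Matrix.mul_apply, Matrix.transpose_apply] using h2
  have hpos : ∀ (t : Fin r → Bool) (k l : Fin n), k ∈ signBlock Ustar t →
      l ∈ signBlock Ustar t → 0 ≤ ∑ j, Ustar k j * Ustar l j := by
    intro t k l hk hl
    apply Finset.sum_nonneg
    intro j _
    rcases Bool.eq_false_or_eq_true (t j) with hc2 | hc
    · exact le_of_lt (mul_pos ((hk j).mpr hc2) ((hl j).mpr hc2))
    · have h1 : Ustar k j < 0 :=
        lt_of_le_of_ne (not_lt.mp (fun h => by simpa [hc] using (hk j).mp h)) (hnz k j)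
      have h2 : Ustar l j < 0 :=
        lt_of_le_of_ne (not_lt.mp (fun h => by simpa [hc] using (hl j).mp h)) (hnz l j)
      exact le_of_lt (mul_pos_of_neg_of_neg h1 h2)
  have hVex : ∀ i : Fin (2 ^ r), ∃ W : Matrix (Fin r) (Fin r) ℝ, W + Wᵀ = 0 ∧
      ∀ k ∈ signBlock Ustar (s i), ∀ a, D k a = ∑ b, Ustar k b * W b a :=
    fun i => blockV' Ustar D (s i) (hA1 i)
      (fun k l hk hl => hrel0 k l (hpos (s i) k l hk hl))
  choose V hVskew hVrow using hVex
  have hstep : ∀ (i : ℕ) (h : i + 1 < 2 ^ r),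
      V ⟨i + 1, h⟩ = V ⟨i, Nat.lt_of_succ_lt h⟩ := by
    intro i h
    set i0 : Fin (2 ^ r) := ⟨i, Nat.lt_of_succ_lt h⟩ with hi0
    set i1 : Fin (2 ^ r) := ⟨i + 1, h⟩ with hi1
    set X : Matrix (Fin r) (Fin r) ℝ := (V i0)ᵀ + V i1 with hX
    have hXzero : X = 0 := by
      set φ : Matrix (Fin r) (Fin r) ℝ →ₗ[ℝ] ℝ :=
        { toFun := fun M => ∑ a, ∑ b, M a b * X a b
          map_add' := by intro x y; simp [Matrix.add_apply, add_mul, Finset.sum_add_distrib]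
          map_smul' := by intro c x; simp [Matrix.smul_apply, smul_eq_mul, Finset.mul_sum, mul_assoc] } with hφ
      have hsub : {A : Matrix (Fin r) (Fin r) ℝ |
          ∃ k l : Fin n, k ∈ signBlock Ustar (s ⟨i + 1, h⟩) ∧
            l ∈ signBlock Ustar (s ⟨i, Nat.lt_of_succ_lt h⟩) ∧
            0 ≤ ∑ j, Ustar k j * Ustar l j ∧
            A = Matrix.of fun a b => Ustar k a * Ustar l b} ⊆
          (LinearMap.ker φ : Submodule ℝ (Matrix (Fin r) (Fin r) ℝ)) := by
        rintro M ⟨k, l, hk, hl, hip, rfl⟩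
        simp only [SetLike.mem_coe, LinearMap.mem_ker]
        have hrel := hrel0 k l hip
        have e1 : ∑ j, Ustar k j * D l j =
            ∑ a, ∑ b, Ustar k a * Ustar l b * (V i0) b a := by
          calc ∑ j, Ustar k j * D l j
              = ∑ j, Ustar k j * ∑ b, Ustar l b * V i0 b j := by
                refine Finset.sum_congr rfl fun j _ => ?_
                rw [hVrow i0 l hl j]
            _ = ∑ a, ∑ b, Ustar k a * Ustar l b * V i0 b a := by
                refine Finset.sum_congr rfl fun j _ => ?_
                rw [Finset.mul_sum]
                exact Finset.sum_congr rfl fun b _ => by ring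
        have e2 : ∑ j, D k j * Ustar l j =
            ∑ a, ∑ b, Ustar k a * Ustar l b * (V i1) a b := by
          calc ∑ j, D k j * Ustar l j
              = ∑ j, (∑ b, Ustar k b * V i1 b j) * Ustar l j := by
                refine Finset.sum_congr rfl fun j _ => ?_
                rw [hVrow i1 k hk j]
            _ = ∑ j, ∑ b, Ustar k b * Ustar l j * V i1 b j := by
                refine Finset.sum_congr rfl fun j _ => ?_
                rw [Finset.sum_mul]
                exact Finset.sum_congr rfl fun b _ => by ring
            _ = ∑ a, ∑ b, Ustar k a * Ustar l b * V i1 a b := Finset.sum_comm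
        show ∑ a, ∑ b, (Matrix.of fun a b => Ustar k a * Ustar l b) a b * X a b = 0
        calc ∑ a, ∑ b, (Matrix.of fun a b => Ustar k a * Ustar l b) a b * X a b
            = (∑ a, ∑ b, Ustar k a * Ustar l b * V i0 b a) +
              (∑ a, ∑ b, Ustar k a * Ustar l b * V i1 a b) := by
              simp [hX, Matrix.add_apply, Matrix.transpose_apply, mul_add,
                Finset.sum_add_distrib]
          _ = (∑ j, Ustar k j * D l j) + (∑ j, D k j * Ustar l j) := by rw [e1, e2]
          _ = 0 := hrel
      have hker : (⊤ : Submodule ℝ (Matrix (Fin r) (Fin r) ℝ)) ≤ LinearMap.ker φ := by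
        rw [← hA2 i h]
        exact Submodule.span_le.mpr hsub
      have hφ0 : ∀ M : Matrix (Fin r) (Fin r) ℝ, φ M = 0 :=
        fun M => LinearMap.mem_ker.mp (hker Submodule.mem_top)
      ext a b
      have := hφ0 (Matrix.of fun a' b' => if a' = a then (if b' = b then (1 : ℝ) else 0) else 0)
      simp only [hφ, LinearMap.coe_mk, AddHom.coe_mk, Matrix.of_apply, ite_mul, one_mul,
        zero_mul, Finset.sum_ite_eq', Finset.mem_univ, if_true] at this
      simpa using this
    have h0 : (V i0)ᵀ = -(V i0) := by
      have := hVskew i0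
      exact eq_neg_of_add_eq_zero_right this
    have h1 : V i1 = -((V i0)ᵀ) := eq_neg_of_add_eq_zero_right hXzero
    rw [h1, h0, neg_neg]
  have hall : ∀ (m : ℕ) (hm : m < 2 ^ r), V ⟨m, hm⟩ = V ⟨0, pos2r⟩ := by
    intro m
    induction m with
    | zero => intro hm; rfl
    | succ p ih => intro hm; rw [hstep p hm]; exact ih (Nat.lt_of_succ_lt hm)
  refine ⟨V ⟨0, pos2r⟩, hVskew _, ?_⟩
  ext k a
  obtain ⟨i, hi⟩ := hs.1.2 (fun j => decide (0 < Ustar k j))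
  have hk : k ∈ signBlock Ustar (s i) := by
    intro j
    rw [hi]
    simp
  have hrow := hVrow i k hk a
  have hVi : V i = V ⟨0, pos2r⟩ := by
    rcases i with ⟨m, hm⟩
    exact hall m hm
  rw [hVi] at hrow
  rw [hrow, Matrix.mul_apply]
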